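/- For natural numbers m, n, l: \sum_{k=0}^{\min(m,n)} E_k(z) \binom{m}{k} \binom{m-k+l}{n-k} = \sum_{k=0}^{\min(m,n)} E_k(z+1) \binom{m}{k} \binom{l}{n-k}, as an identity of polynomials in z, where E_k are the Euler polynomials. -/

import Mathlib

open Polynomial Finset

noncomputable def eulerPoly : ℕ → Polynomial ℚ :=
  WellFounded.fix Nat.lt_wfRel.wf fun n E =>
    Polynomial.X ^ n - Polynomial.C (1/2 : ℚ) *
      ∑ k : Fin n, Polynomial.C (n.choose k : ℚ) * E k k.2

lemma eulerPoly_def (n : ℕ) :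
    eulerPoly n = Polynomial.X ^ n - Polynomial.C (1/2 : ℚ) *
      ∑ k ∈ Finset.range n, Polynomial.C (n.choose k : ℚ) * eulerPoly k := by
  have : eulerPoly n = Polynomial.X ^ n - Polynomial.C (1/2 : ℚ) *
      ∑ k : Fin n, Polynomial.C (n.choose k : ℚ) * eulerPoly k := by
    conv_lhs => rw [eulerPoly, WellFounded.fix_eq]
    rfl
  rw [this, Fin.sum_univ_eq_sum_range fun k => Polynomial.C (n.choose k : ℚ) * eulerPoly k]

lemma X_add_one_pow (n : ℕ) : (Polynomial.X + 1 : Polynomial ℚ) ^ n =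
    ∑ k ∈ Finset.range (n+1), Polynomial.C (n.choose k : ℚ) * Polynomial.X ^ k := by
  rw [add_pow]
  refine Finset.sum_congr rfl fun k hk => ?_
  simp [Polynomial.C_eq_natCast, mul_comm]

lemma eulerPoly_comp (n : ℕ) : (eulerPoly n).comp (Polynomial.X + 1) =
    Polynomial.C 2 * Polynomial.X ^ n - eulerPoly n := by
  induction n using Nat.strong_induction_on with
  | _ n ih =>
    conv_lhs => rw [eulerPoly_def n]
    rw [Polynomial.sub_comp, Polynomial.pow_comp, Polynomial.X_comp, Polynomial.mul_comp,
      Polynomial.C_comp]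
    rw [Polynomial.sum_comp]
    have hsum : ∑ k ∈ Finset.range n,
        (Polynomial.C (n.choose k : ℚ) * eulerPoly k).comp (Polynomial.X + 1) =
        Polynomial.C 2 * (∑ k ∈ Finset.range n, Polynomial.C (n.choose k : ℚ) * Polynomial.X ^ k)
          - ∑ k ∈ Finset.range n, Polynomial.C (n.choose k : ℚ) * eulerPoly k := by
      rw [Finset.mul_sum, ← Finset.sum_sub_distrib]
      refine Finset.sum_congr rfl fun k hk => ?_
      rw [Polynomial.mul_comp, Polynomial.C_comp, ih k (Finset.mem_range.mp hk)]
      ring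
    rw [hsum, X_add_one_pow n, Finset.sum_range_succ]
    conv_rhs => rw [eulerPoly_def n]
    have h2 : Polynomial.C (1/2 : ℚ) * Polynomial.C (2:ℚ) = 1 := by
      rw [← Polynomial.C_mul]; norm_num
    simp only [Nat.choose_self, Nat.cast_one, Polynomial.C_1, one_mul]
    have hC2 : Polynomial.C (2:ℚ) = 2 := map_ofNat Polynomial.C 2
    linear_combination (- ∑ k ∈ Finset.range n, Polynomial.C (n.choose k : ℚ) * Polynomial.X ^ k) * h2 - Polynomial.X ^ n * hC2

lemma eulerPoly_comp_eq_sum (n : ℕ) : (eulerPoly n).comp (Polynomial.X + 1) =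
    ∑ j ∈ Finset.range (n+1), Polynomial.C (n.choose j : ℚ) * eulerPoly j := by
  rw [eulerPoly_comp, Finset.sum_range_succ, Nat.choose_self, eulerPoly_def n]
  have h2 : Polynomial.C (1/2 : ℚ) * Polynomial.C (2:ℚ) = 1 := by
    rw [← Polynomial.C_mul]; norm_num
  have hC2 : Polynomial.C (2:ℚ) = 2 := map_ofNat Polynomial.C 2
  push_cast
  simp only [Polynomial.C_1, one_mul]
  linear_combination (∑ k ∈ Finset.range n, Polynomial.C (n.choose k : ℚ) * eulerPoly k) * h2 + Polynomial.X ^ n * hC2 - Polynomial.C (1/2:ℚ) * (∑ k ∈ Finset.range n, Polynomial.C (n.choose k : ℚ) * eulerPoly k) * hC2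

lemma key_nat (m n l j : ℕ) (hj : j ≤ min m n) :
    ∑ k ∈ Finset.Ico j (min m n + 1), m.choose k * k.choose j * l.choose (n - k)
      = m.choose j * (m - j + l).choose (n - j) := by
  have h1 : ∀ k ∈ Finset.Ico j (min m n + 1),
      m.choose k * k.choose j * l.choose (n - k)
        = m.choose j * ((m - j).choose (k - j) * l.choose (n - k)) := by
    intro k hk
    rw [Finset.mem_Ico] at hk
    rw [Nat.choose_mul (by omega)]
    ring
  rw [Finset.sum_congr rfl h1, ← Finset.mul_sum]
  congr 1
  rw [Finset.sum_Ico_eq_sum_range]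
  have h2 : ∀ d ∈ Finset.range (min m n + 1 - j),
      (m - j).choose (j + d - j) * l.choose (n - (j + d))
        = (m - j).choose d * l.choose (n - j - d) := by
    intro d hd
    congr 1 <;> [congr 1; congr 1] <;> omega
  rw [Finset.sum_congr rfl h2]
  rw [Nat.add_choose_eq, Finset.Nat.sum_antidiagonal_eq_sum_range_succ_mk]
  apply Finset.sum_subset
  · intro d hd
    simp only [Finset.mem_range] at *
    omega
  · intro d hd1 hd2
    simp only [Finset.mem_range] at hd1 hd2
    have : m - j < d := by omega
    rw [Nat.choose_eq_zero_of_lt this, zero_mul]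

theorem eulerPoly_binomial_shift_identity (m n l : ℕ) :
    ∑ k ∈ Finset.range (min m n + 1),
        ((m.choose k : ℚ) * ((m - k + l).choose (n - k) : ℚ)) • eulerPoly k =
      ∑ k ∈ Finset.range (min m n + 1),
        ((m.choose k : ℚ) * (l.choose (n - k) : ℚ)) •
          (eulerPoly k).comp (Polynomial.X + 1) := by
  simp only [Polynomial.smul_eq_C_mul, eulerPoly_comp_eq_sum]
  have step : ∀ k : ℕ, Polynomial.C ((m.choose k : ℚ) * (l.choose (n - k) : ℚ)) *
      ∑ j ∈ Finset.range (k+1), Polynomial.C (k.choose j : ℚ) * eulerPoly j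
      = ∑ j ∈ Finset.range (k+1),
          Polynomial.C ((m.choose k : ℚ) * (l.choose (n - k) : ℚ) * (k.choose j : ℚ)) *
            eulerPoly j := by
    intro k
    rw [Finset.mul_sum]
    refine Finset.sum_congr rfl fun j _ => ?_
    rw [← mul_assoc, ← Polynomial.C_mul]
  rw [Finset.sum_congr rfl fun k _ => step k]
  simp only [Finset.range_eq_Ico]
  rw [← Finset.sum_Ico_Ico_comm 0 (min m n + 1) (fun j k =>
    Polynomial.C ((m.choose k : ℚ) * (l.choose (n - k) : ℚ) * (k.choose j : ℚ)) * eulerPoly j)]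
  refine Finset.sum_congr rfl fun j hj => ?_
  rw [Finset.mem_Ico] at hj
  rw [← Finset.sum_mul, ← map_sum]
  congr 1
  congr 1
  have h := key_nat m n l j (by omega)
  calc (m.choose j : ℚ) * ((m - j + l).choose (n - j) : ℚ)
      = ((∑ k ∈ Finset.Ico j (min m n + 1),
          m.choose k * k.choose j * l.choose (n - k) : ℕ) : ℚ) := by
        rw [h]; push_cast; ring
    _ = ∑ k ∈ Finset.Ico j (min m n + 1),
          (m.choose k : ℚ) * (l.choose (n - k) : ℚ) * (k.choose j : ℚ) := by
        push_cast
        exact Finset.sum_congr rfl fun k _ => by ring
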